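/- Let k ≥ 2 be an integer and let G be a finite graph. If G has a tree-decomposition in which every torso has at most k vertices of degree at least k (degree measured in the torso), then G has no (k+1)-block. -/

import Mathlib

open SimpleGraph

/-- `x` and `y` lie in the same component of `G - S`:
there is a walk from `x` to `y` in `G` avoiding `S`. -/
def ConnAvoiding {V : Type} (G : SimpleGraph V) (S : Set V) (x y : V) : Prop :=
  ∃ p : G.Walk x y, ∀ v ∈ p.support, v ∉ S

/-- `X` is a `(<k)`-inseparable set of vertices of `G`: it has at least `k` vertices and
no two of its vertices can be separated by deleting fewer than `k` vertices. -/
def IsInseparable {V : Type} (G : SimpleGraph V) (k : ℕ) (X : Set V) : Prop :=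
  k ≤ X.ncard ∧
  ∀ x ∈ X, ∀ y ∈ X, x ≠ y → ∀ S : Set V, S.ncard < k → x ∉ S → y ∉ S →
    ConnAvoiding G S x y

/-- `X` is a `k`-block of `G`: a maximal `(<k)`-inseparable set of vertices. -/
def IsBlock {V : Type} (G : SimpleGraph V) (k : ℕ) (X : Set V) : Prop :=
  IsInseparable G k X ∧ ∀ Y : Set V, IsInseparable G k Y → X ⊆ Y → Y = X

/-- The block number `β(G)`: the maximum `k` for which `G` contains a `k`-block. -/
noncomputable def blockNumber {V : Type} (G : SimpleGraph V) : ℕ :=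
  sSup {k : ℕ | ∃ X : Set V, IsBlock G k X}

/-- There is a `k`-fan from `v` to `U` in `G`: `k` paths starting at `v`, otherwise
disjoint, each ending in `U` (trivial paths allowed). -/
def IsFanTo {V : Type} (G : SimpleGraph V) (k : ℕ) (v : V) (U : Set V) : Prop :=
  ∃ (e : Fin k → V) (P : ∀ i : Fin k, G.Path v (e i)),
    (∀ i, e i ∈ U) ∧
    ∀ i j : Fin k, i ≠ j →
      ∀ w, w ∈ (P i).val.support → w ∈ (P j).val.support → w = v

/-- `X` is a `k`-fan-set: from every `x ∈ X` there is a `k`-fan to `X`. -/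
def IsFanSet {V : Type} (G : SimpleGraph V) (k : ℕ) (X : Set V) : Prop :=
  ∀ x ∈ X, IsFanTo G k x X

/-- The `∞`-admissibility of `G`: the maximum `k` for which `G` contains a nonempty
`k`-fan-set. -/
noncomputable def admInf {V : Type} (G : SimpleGraph V) : ℕ :=
  sSup {k : ℕ | ∃ X : Set V, X.Nonempty ∧ IsFanSet G k X}

/-- `C` is (the vertex set of) a connected component of the subgraph of `G` induced
on `A`: a maximal subset of `A` inducing a connected subgraph. -/
def IsCompOf {V : Type} (G : SimpleGraph V) (A C : Set V) : Prop :=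
  C ⊆ A ∧ (G.induce C).Connected ∧
  ∀ D : Set V, C ⊆ D → D ⊆ A → (G.induce D).Connected → D = C

/-- `H` is a minor of `G`, via disjoint nonempty connected branch sets. -/
def IsMinor {W V : Type} (H : SimpleGraph W) (G : SimpleGraph V) : Prop :=
  ∃ B : W → Set V,
    (∀ h, (B h).Nonempty) ∧
    (∀ h, (G.induce (B h)).Connected) ∧
    (∀ h h', h ≠ h' → Disjoint (B h) (B h')) ∧
    ∀ h h', H.Adj h h' → ∃ u ∈ B h, ∃ v ∈ B h', G.Adj u v

/-- `H` is a topological minor of `G`: there are branch vertices `φ u` and, for every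
edge `uv` of `H`, a path in `G` from `φ u` to `φ v`; distinct edge-paths meet only in
branch vertices (hence only in common endpoints), and internal vertices of the paths
are not branch vertices. -/
def IsTopMinor {W V : Type} (H : SimpleGraph W) (G : SimpleGraph V) : Prop :=
  ∃ (φ : W ↪ V) (P : ∀ u v : W, H.Adj u v → G.Path (φ u) (φ v)),
    (∀ u v (h : H.Adj u v) w, w ∈ (P u v h).val.support →
        w ∈ Set.range φ → w = φ u ∨ w = φ v) ∧
    (∀ u v (h : H.Adj u v) u' v' (h' : H.Adj u' v'), s(u, v) ≠ s(u', v') →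
        ∀ w, w ∈ (P u v h).val.support → w ∈ (P u' v' h').val.support →
          w ∈ Set.range φ)

/-- A tree-decomposition of `G` with tree on node type `T`. -/
structure TreeDecomp {V : Type} (G : SimpleGraph V) (T : Type) where
  tree : SimpleGraph T
  isTree : tree.IsTree
  part : T → Set V
  part_covers : ∀ v : V, ∃ t, v ∈ part t
  part_edge : ∀ ⦃u v : V⦄, G.Adj u v → ∃ t, u ∈ part t ∧ v ∈ part t
  part_path : ∀ (t₁ t₂ t₃ : T) (p : tree.Path t₁ t₃), t₂ ∈ p.val.support →
    part t₁ ∩ part t₃ ⊆ part t₂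

/-- `m` pairwise vertex-disjoint `A`–`B` paths in `G`. -/
def DisjPaths {V : Type} (G : SimpleGraph V) (m : ℕ) (A B : Set V) : Prop :=
  ∃ (a b : Fin m → V) (P : ∀ i : Fin m, G.Path (a i) (b i)),
    (∀ i, a i ∈ A) ∧ (∀ i, b i ∈ B) ∧
    ∀ i j : Fin m, i ≠ j → ∀ w, w ∈ (P i).val.support → w ∉ (P j).val.support

/-- `a` is lexicographically smaller than `b` as `(n+1)`-tuples `(a 0, …, a n)`. -/
def FatLexLT (n : ℕ) (a b : ℕ → ℕ) : Prop :=
  ∃ i ≤ n, (∀ j < i, a j = b j) ∧ a i < b i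

namespace TreeDecomp

variable {V T : Type} {G : SimpleGraph V}

/-- The tree-decomposition has adhesion less than `k`. -/
def AdhesionLT (D : TreeDecomp G T) (k : ℕ) : Prop :=
  ∀ ⦃s t : T⦄, D.tree.Adj s t → (D.part s ∩ D.part t).ncard < k

/-- The torso of the part at node `t`: the induced subgraph on `part t`, with edges
added between any two vertices lying in a common adhesion-set at `t`. -/
def torso (D : TreeDecomp G T) (t : T) : SimpleGraph V where
  Adj u v := u ≠ v ∧ u ∈ D.part t ∧ v ∈ D.part t ∧
    (G.Adj u v ∨ ∃ s : T, D.tree.Adj s t ∧ u ∈ D.part s ∧ v ∈ D.part s)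
  symm := by
    constructor
    rintro u v ⟨h1, h2, h3, h4⟩
    refine ⟨h1.symm, h3, h2, ?_⟩
    rcases h4 with h | ⟨s, hs, hu, hv⟩
    · exact Or.inl h.symm
    · exact Or.inr ⟨s, hs, hv, hu⟩
  loopless := ⟨fun u h => h.1 rfl⟩

/-- Degree of `x` in the torso at `t`. -/
noncomputable def torsoDeg (D : TreeDecomp G T) (t : T) (x : V) : ℕ :=
  ((D.torso t).neighborSet x).ncard

/-- The width of a tree-decomposition: `max (|V_t| - 1)`. -/
noncomputable def width [Fintype T] (D : TreeDecomp G T) : ℕ :=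
  Finset.univ.sup fun t : T => (D.part t).ncard - 1

/-- Entry `i` of the fatness tuple: the number of parts of size `n - i`,
where `n = |V(G)|`. -/
noncomputable def fatness [Fintype V] (D : TreeDecomp G T) (i : ℕ) : ℕ :=
  {t : T | (D.part t).ncard = Fintype.card V - i}.ncard

/-- The tree-decomposition is `k`-atomic: it has adhesion `< k` and its fatness is
lexicographically minimum among all tree-decompositions of `G` of adhesion `< k`. -/
def IsAtomic [Fintype V] (D : TreeDecomp G T) (k : ℕ) : Prop :=
  D.AdhesionLT k ∧
  ∀ (T' : Type) (_ : Fintype T') (D' : TreeDecomp G T'), D'.AdhesionLT k →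
    ¬ FatLexLT (Fintype.card V) D'.fatness D.fatness

/-- The tree-decomposition is `k`-lean. -/
def IsLean (D : TreeDecomp G T) (k : ℕ) : Prop :=
  D.AdhesionLT k ∧
  ∀ (s t : T) (A B : Set V), A ⊆ D.part s → B ⊆ D.part t →
    A.ncard = B.ncard → A.ncard ≤ k →
    DisjPaths G A.ncard A B ∨
    ∃ u w : T, D.tree.Adj u w ∧
      (∀ p : D.tree.Path s t, s(u, w) ∈ p.val.edges) ∧
      (D.part u ∩ D.part w).ncard < A.ncard

end TreeDecomp


namespace Stmt1Aux

open SimpleGraph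
open scoped Classical

variable {V T : Type} {G : SimpleGraph V} (D : TreeDecomp G T)

lemma walk_unique {u v : T} (p q : D.tree.Walk u v) (hp : p.IsPath) (hq : q.IsPath) :
    p = q := by
  obtain ⟨r, -, hr⟩ := D.isTree.existsUnique_path u v
  rw [hr p hp, hr q hq]

/-- `u` lies on the `b`-side of the tree edge `ab`. -/
def Side (D : TreeDecomp G T) (a b u : T) : Prop :=
  ∀ p : D.tree.Walk u a, p.IsPath → b ∈ p.support

lemma side_of_path {a b u : T} (p : D.tree.Walk u a) (hp : p.IsPath)
    (hb : b ∈ p.support) : Side D a b u := fun q hq => by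
  rw [walk_unique D q p hq hp]; exact hb

lemma side_step {a b u w : T} (hab : D.tree.Adj a b) (hu : Side D a b u)
    (huw : D.tree.Adj u w) (hw : ¬ Side D a b w) : u = b ∧ w = a := by
  unfold Side at hw
  push_neg at hw
  obtain ⟨p, hp, hbp⟩ := hw
  by_cases hmem : u ∈ p.support
  · exact absurd (hu (p.dropUntil u hmem) (hp.dropUntil hmem))
      fun h => hbp (p.support_dropUntil_subset hmem h)
  · have hq : (Walk.cons huw p).IsPath := (Walk.cons_isPath_iff _ _).2 ⟨hp, hmem⟩
    have hbq := hu (Walk.cons huw p) hq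
    rw [Walk.support_cons, List.mem_cons] at hbq
    have hub : u = b := by
      rcases hbq with h | h
      · exact h.symm
      · exact absurd h hbp
    subst hub
    refine ⟨rfl, ?_⟩
    have heq := walk_unique D (Walk.cons huw p) (Walk.cons hab.symm Walk.nil) hq
      ((Walk.cons_isPath_iff _ _).2 ⟨Walk.IsPath.nil, by
        rw [Walk.support_nil, List.mem_singleton]; exact hab.ne'⟩)
    have hsupp := congrArg Walk.support heq
    rw [Walk.support_cons, Walk.support_cons, Walk.support_nil, p.support_eq_cons] at hsupp
    simp only [List.cons.injEq] at hsupp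
    exact hsupp.2.1

lemma side_cross {a b : T} (hab : D.tree.Adj a b) :
    ∀ {u u' : T} (q : D.tree.Walk u u'), Side D a b u → ¬ Side D a b u' →
      a ∈ q.support ∧ b ∈ q.support := by
  intro u u' q
  induction q with
  | nil => intro h h'; exact absurd h h'
  | @cons x y z h q ih =>
    intro hu hu'
    by_cases hys : Side D a b y
    · obtain ⟨ha, hb⟩ := ih hys hu'
      exact ⟨by rw [Walk.support_cons]; exact List.mem_cons_of_mem _ ha,
             by rw [Walk.support_cons]; exact List.mem_cons_of_mem _ hb⟩
    · obtain ⟨hxb, hya⟩ := side_step D hab hu h hys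
      subst hxb
      subst hya
      exact ⟨by rw [Walk.support_cons]; exact List.mem_cons_of_mem _ q.start_mem_support,
             Walk.start_mem_support _⟩

/-- The union of the parts on the `b`-side of the tree edge `ab`. -/
def Big (D : TreeDecomp G T) (a b : T) : Set V := {v | ∃ u, Side D a b u ∧ v ∈ D.part u}

lemma big_inter_parta {a b : T} {v : V} (hv : v ∈ Big D a b) (hva : v ∈ D.part a) :
    v ∈ D.part b := by
  obtain ⟨u, hu, hvu⟩ := hv
  obtain ⟨w⟩ := D.isTree.isConnected.preconnected u a
  exact D.part_path u b a w.toPath (hu w.toPath.val w.toPath.prop) ⟨hvu, hva⟩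

lemma mem_adhesion_of_cross {a b : T} (hab : D.tree.Adj a b) {v v' : V}
    (hv : v ∈ Big D a b) (hv' : v' ∉ Big D a b) (hadj : G.Adj v v') :
    v ∈ D.part a ∩ D.part b := by
  obtain ⟨n, hvn, hv'n⟩ := D.part_edge hadj
  have hns : ¬ Side D a b n := fun hs => hv' ⟨n, hs, hv'n⟩
  obtain ⟨u', hu', hvu'⟩ := hv
  obtain ⟨w⟩ := D.isTree.isConnected.preconnected u' n
  obtain ⟨ha, hb⟩ := side_cross D hab w.toPath.val hu' hns
  exact ⟨D.part_path u' a n w.toPath ha ⟨hvu', hvn⟩,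
         D.part_path u' b n w.toPath hb ⟨hvu', hvn⟩⟩

lemma exists_adhesion_on_walk {a b : T} (hab : D.tree.Adj a b) :
    ∀ {x y : V} (q : G.Walk x y), x ∈ Big D a b → y ∉ Big D a b →
      ∃ z ∈ q.support, z ∈ D.part a ∩ D.part b := by
  intro x y q
  induction q with
  | nil => intro h h'; exact absurd h h'
  | @cons x w y h q ih =>
    intro hx hy
    by_cases hwB : w ∈ Big D a b
    · obtain ⟨z, hz, hzA⟩ := ih hwB hy
      exact ⟨z, by rw [Walk.support_cons]; exact List.mem_cons_of_mem _ hz, hzA⟩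
    · exact ⟨x, Walk.start_mem_support _, mem_adhesion_of_cross D hab hx hwB h⟩

lemma scan_aux {x : V} : ∀ {t s : T} (q : D.tree.Walk t s), q.IsPath →
    x ∉ D.part t → x ∈ D.part s →
    ∃ a b, D.tree.Adj a b ∧ x ∈ D.part a ∧ x ∉ D.part b ∧
      ∃ r : D.tree.Walk t a, r.IsPath ∧ b ∈ r.support ∧ ∀ z ∈ r.support, z ∈ q.support := by
  intro t s q
  induction q with
  | nil => intro _ hxt hxs; exact absurd hxs hxt
  | @cons t w s h q ih =>
    intro hq hxt hxs
    by_cases hxw : x ∈ D.part w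
    · refine ⟨w, t, h.symm, hxw, hxt, Walk.cons h Walk.nil, ?_, ?_, ?_⟩
      · exact (Walk.cons_isPath_iff _ _).2 ⟨Walk.IsPath.nil, by
          rw [Walk.support_nil, List.mem_singleton]; exact h.ne⟩
      · exact Walk.start_mem_support _
      · intro z hz
        simp only [Walk.support_cons, Walk.support_nil, List.mem_cons,
          List.mem_singleton, List.not_mem_nil, or_false] at hz
        rw [Walk.support_cons, List.mem_cons]
        rcases hz with h1 | h1
        · exact Or.inl h1
        · exact Or.inr (h1 ▸ q.start_mem_support)
    · obtain ⟨a, b, hab, hxa, hxb, r, hr, hbr, hrs⟩ := ih hq.of_cons hxw hxs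
      have htr : t ∉ r.support := fun hmem =>
        ((Walk.cons_isPath_iff h q).1 hq).2 (hrs t hmem)
      refine ⟨a, b, hab, hxa, hxb, Walk.cons h r, (Walk.cons_isPath_iff _ _).2 ⟨hr, htr⟩,
        by rw [Walk.support_cons]; exact List.mem_cons_of_mem _ hbr, ?_⟩
      intro z hz
      rw [Walk.support_cons, List.mem_cons] at hz
      rw [Walk.support_cons, List.mem_cons]
      rcases hz with h1 | h1
      · exact Or.inl h1
      · exact Or.inr (hrs z h1)

lemma neighbor_on_walk : ∀ {u t : T} (p : D.tree.Walk u t), u ≠ t →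
    ∃ c, D.tree.Adj t c ∧ c ∈ p.support := by
  intro u t p
  induction p with
  | nil => intro h; exact absurd rfl h
  | @cons u w t h q ih =>
    intro _
    by_cases hwt : w = t
    · subst hwt
      exact ⟨u, h.symm, Walk.start_mem_support _⟩
    · obtain ⟨c, h1, h2⟩ := ih hwt
      exact ⟨c, h1, by rw [Walk.support_cons]; exact List.mem_cons_of_mem _ h2⟩

lemma torso_return {t : T} {x : V} (hxt : x ∈ D.part t) :
    ∀ (n : ℕ) {y : V} (p : G.Walk x y), p.length ≤ n → y ∈ D.part t → x ≠ y →
      ∃ z ∈ p.support, (D.torso t).Adj x z := by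
  intro n
  induction n with
  | zero =>
    intro y p hlen hyt hxy
    cases p with
    | nil => exact absurd rfl hxy
    | cons h q => rw [Walk.length_cons] at hlen; omega
  | succ n ih =>
    intro y p hlen hyt hxy
    cases p with
    | nil => exact absurd rfl hxy
    | @cons _ w _ hxw q =>
      by_cases hwt : w ∈ D.part t
      · exact ⟨w, by rw [Walk.support_cons]; exact List.mem_cons_of_mem _ q.start_mem_support,
          ⟨hxw.ne, hxt, hwt, Or.inl hxw⟩⟩
      · obtain ⟨u, hxu, hwu⟩ := D.part_edge hxw
        have hut : u ≠ t := fun he => hwt (he ▸ hwu)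
        obtain ⟨w0⟩ := D.isTree.isConnected.preconnected u t
        obtain ⟨c, htc, hcP⟩ := neighbor_on_walk D w0.toPath.val hut
        have hSu : Side D t c u := side_of_path D w0.toPath.val w0.toPath.prop hcP
        have hxc : x ∈ D.part c := D.part_path u c t w0.toPath hcP ⟨hxu, hxt⟩
        have hwBig : w ∈ Big D t c := ⟨u, hSu, hwu⟩
        have hlen2 : q.length ≤ n := by
          rw [Walk.length_cons] at hlen; omega
        by_cases hyBig : y ∈ Big D t c
        · have hyc : y ∈ D.part c := big_inter_parta D hyBig hyt
          exact ⟨y, Walk.end_mem_support _, ⟨hxy, hxt, hyt, Or.inr ⟨c, htc.symm, hxc, hyc⟩⟩⟩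
        · obtain ⟨z, hzq, hzA⟩ := exists_adhesion_on_walk D htc q hwBig hyBig
          by_cases hzx : z = x
          · have hxq : x ∈ q.support := hzx ▸ hzq
            have hlen3 : (q.dropUntil x hxq).length ≤ n :=
              le_trans (q.length_dropUntil_le hxq) hlen2
            obtain ⟨z', hz', hadj'⟩ := ih (q.dropUntil x hxq) hlen3 hyt hxy
            exact ⟨z', by
              rw [Walk.support_cons]
              exact List.mem_cons_of_mem _ (q.support_dropUntil_subset hxq hz'), hadj'⟩
          · exact ⟨z, by rw [Walk.support_cons]; exact List.mem_cons_of_mem _ hzq,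
              ⟨fun he => hzx he.symm, hxt, hzA.1, Or.inr ⟨c, htc.symm, hxc, hzA.2⟩⟩⟩

lemma adhesion_le [Fintype V] {k : ℕ}
    (hD : ∀ t : T, {x : V | x ∈ D.part t ∧ k ≤ D.torsoDeg t x}.ncard ≤ k)
    {a b : T} (hab : D.tree.Adj a b) : (D.part a ∩ D.part b).ncard ≤ k := by
  by_contra hlt
  push_neg at hlt
  have hsub : D.part a ∩ D.part b ⊆ {x : V | x ∈ D.part b ∧ k ≤ D.torsoDeg b x} := by
    intro x hx
    refine ⟨hx.2, ?_⟩
    have hsub2 : (D.part a ∩ D.part b) \ {x} ⊆ (D.torso b).neighborSet x := by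
      intro y hy
      have hyx : y ≠ x := hy.2
      exact ⟨fun he => hyx he.symm, hx.2, hy.1.2, Or.inr ⟨a, hab, hx.1, hy.1.1⟩⟩
    have h1 := Set.ncard_le_ncard hsub2 (Set.toFinite _)
    have h2 : ((D.part a ∩ D.part b) \ {x}).ncard = (D.part a ∩ D.part b).ncard - 1 :=
      Set.ncard_diff_singleton_of_mem hx
    unfold TreeDecomp.torsoDeg
    omega
  have h3 := Set.ncard_le_ncard hsub (Set.toFinite _)
  have h4 := hD b
  omega

end Stmt1Aux

open Stmt1Aux in
/-- If `G` has a tree-decomposition in which every torso has at most `k`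
vertices of degree at least `k` (`k ≥ 2`), then `G` has no `(k+1)`-block. -/
theorem stmt_1 {V T : Type} [Fintype V] [Fintype T] (G : SimpleGraph V) (k : ℕ)
    (hk : 2 ≤ k) (D : TreeDecomp G T)
    (hD : ∀ t : T, {x : V | x ∈ D.part t ∧ k ≤ D.torsoDeg t x}.ncard ≤ k) :
    ¬ ∃ X : Set V, IsBlock G (k + 1) X := by
  classical
  rintro ⟨X, hB⟩
  obtain ⟨hXcard, hXsep⟩ := hB.1
  have hadh : ∀ {a b : T}, D.tree.Adj a b → (D.part a ∩ D.part b).ncard ≤ k :=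
    fun hab => adhesion_le D hD hab
  have hXne : X.Nonempty := by
    rw [← Set.ncard_pos (Set.toFinite _)]; omega
  obtain ⟨x₀, hx₀⟩ := hXne
  obtain ⟨t₀, ht₀⟩ := D.part_covers x₀
  obtain ⟨t, -, htmax⟩ := Finset.exists_max_image Finset.univ
    (fun t : T => (X ∩ D.part t).ncard) ⟨t₀, Finset.mem_univ _⟩
  -- Step 1: X is contained in the part at t
  have hXt : X ⊆ D.part t := by
    intro x hx
    by_contra hxt
    obtain ⟨s, hxs⟩ := D.part_covers x
    obtain ⟨w0⟩ := D.isTree.isConnected.preconnected t s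
    obtain ⟨a, b, hab, hxa, hxb, r, hr, hbr, -⟩ :=
      scan_aux D w0.toPath.val w0.toPath.prop hxt hxs
    have hside_t : Side D a b t := side_of_path D r hr hbr
    have hxBig : x ∉ Big D a b := fun hmem => hxb (big_inter_parta D hmem hxa)
    by_cases hy : ∃ y, y ∈ X ∩ D.part t ∧ y ∉ D.part a ∩ D.part b
    · obtain ⟨y, ⟨hyX, hyt⟩, hyA⟩ := hy
      have hxy : x ≠ y := fun he => hxt (he ▸ hyt)
      have hxA : x ∉ D.part a ∩ D.part b := fun hmem => hxb hmem.2
      obtain ⟨p, hp⟩ := hXsep y hyX x hx hxy.symm (D.part a ∩ D.part b)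
        (Nat.lt_succ_of_le (hadh hab)) hyA hxA
      obtain ⟨z, hz, hzA⟩ := exists_adhesion_on_walk D hab p ⟨t, hside_t, hyt⟩ hxBig
      exact hp z hz hzA
    · push_neg at hy
      have hsub : insert x (X ∩ D.part t) ⊆ X ∩ D.part a := by
        rintro z hz
        rcases Set.mem_insert_iff.1 hz with rfl | hz'
        · exact ⟨hx, hxa⟩
        · exact ⟨hz'.1, (hy z hz').1⟩
      have h1 := Set.ncard_le_ncard hsub (Set.toFinite _)
      rw [Set.ncard_insert_of_notMem (fun hmem => hxt hmem.2) (Set.toFinite _)] at h1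
      have h2 : (X ∩ D.part a).ncard ≤ (X ∩ D.part t).ncard := htmax a (Finset.mem_univ a)
      omega
  -- Step 2: every vertex of X has torso degree at least k at t
  have hdeg : ∀ x ∈ X, k ≤ D.torsoDeg t x := by
    intro x hx
    by_contra hlt
    push_neg at hlt
    have hxN : x ∉ (D.torso t).neighborSet x := fun h => (D.torso t).loopless.irrefl x h
    by_cases hy : ∃ y ∈ X, y ≠ x ∧ y ∉ (D.torso t).neighborSet x
    · obtain ⟨y, hyX, hyx, hyN⟩ := hy
      have hNk : ((D.torso t).neighborSet x).ncard < k + 1 := by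
        unfold TreeDecomp.torsoDeg at hlt; omega
      obtain ⟨p, hp⟩ := hXsep x hx y hyX hyx.symm ((D.torso t).neighborSet x) hNk hxN hyN
      obtain ⟨z, hz, hzadj⟩ := torso_return D (hXt hx) p.length p le_rfl (hXt hyX)
        (fun he => hyx he.symm)
      exact hp z hz hzadj
    · push_neg at hy
      have hsub : X \ {x} ⊆ (D.torso t).neighborSet x := fun y hy' =>
        hy y hy'.1 hy'.2
      have h1 := Set.ncard_le_ncard hsub (Set.toFinite _)
      have h2 : (X \ {x}).ncard = X.ncard - 1 :=
        Set.ncard_diff_singleton_of_mem hx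
      unfold TreeDecomp.torsoDeg at hlt
      omega
  have hsub : X ⊆ {x : V | x ∈ D.part t ∧ k ≤ D.torsoDeg t x} := fun x hx =>
    ⟨hXt hx, hdeg x hx⟩
  have h1 := Set.ncard_le_ncard hsub (Set.toFinite _)
  have h2 := hD t
  omega
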